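/- Let X be a σ-compact locally compact Hausdorff space and X̄ a compactification. If (x_n) and (y_n) are simple ends in X (sequences escaping every compact subset of X) such that for some continuous f : X̄ → [0,1] the sequence |f(x_n) − f(y_n)| does not converge to 0, then there exists a strictly increasing a : ℕ → ℕ such that the coronas cl({x_{a(n)}}) ∖ X and cl({y_{a(n)}}) ∖ X in X̄ are disjoint and both nonempty. -/

import Mathlib

open Filter Set Topology

/-- If a sequence lies in `X` and `z` is in the closure of its range but not in `X`,
then `z` is a cluster point of the sequence. -/
lemma escape_clusterPt {Z : Type*} [TopologicalSpace Z] [T1Space Z] (X : Set Z)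
    (s : ℕ → Z) (hs : ∀ n, s n ∈ X) {z : Z}
    (hz : z ∈ closure (Set.range s)) (hzX : z ∉ X) : MapClusterPt z atTop s := by
  rw [mapClusterPt_iff_frequently]
  intro U hU
  rw [frequently_atTop]
  intro N
  have htail : z ∈ closure (Set.range fun n => s (n + N)) := by
    have hsplit : Set.range s ⊆ (s '' {m | m < N}) ∪ Set.range (fun n => s (n + N)) := by
      rintro _ ⟨m, rfl⟩
      rcases lt_or_ge m N with h | h
      · exact Or.inl ⟨m, h, rfl⟩
      · exact Or.inr ⟨m - N, by simp [Nat.sub_add_cancel h]⟩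
    have hfin : (s '' {m | m < N}).Finite := Set.Finite.image _ (Set.finite_Iio N)
    have h2 := closure_mono hsplit hz
    rw [closure_union, hfin.isClosed.closure_eq] at h2
    rcases h2 with h | h
    · exact absurd hzX (by rcases h with ⟨m, _, rfl⟩; simp [hs m])
    · exact h
  rcases mem_closure_iff_nhds.mp htail U hU with ⟨w, hwU, n, rfl⟩
  exact ⟨n + N, Nat.le_add_left N n, hwU⟩

theorem stmt16 {Z : Type*} [TopologicalSpace Z] [CompactSpace Z] [T2Space Z]
    (X : Set Z) (hXdense : Dense X) (hXopen : IsOpen X)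
    [SigmaCompactSpace ↥X]
    (x y : ℕ → Z) (hx : ∀ n, x n ∈ X) (hy : ∀ n, y n ∈ X)
    (hsex : ∀ K : Set Z, K ⊆ X → IsCompact K → {n : ℕ | x n ∈ K}.Finite)
    (hsey : ∀ K : Set Z, K ⊆ X → IsCompact K → {n : ℕ | y n ∈ K}.Finite)
    (f : C(Z, ℝ)) (hf01 : ∀ z, f z ∈ Set.Icc (0 : ℝ) 1)
    (hnot : ¬ Tendsto (fun n => |f (x n) - f (y n)|) atTop (nhds 0)) :
    ∃ a : ℕ → ℕ, StrictMono a ∧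
      (closure (Set.range fun n => x (a n)) \ X) ∩
        (closure (Set.range fun n => y (a n)) \ X) = ∅ ∧
      (closure (Set.range fun n => x (a n)) \ X).Nonempty ∧
      (closure (Set.range fun n => y (a n)) \ X).Nonempty := by
  -- Step 1: extract ε > 0 and a subsequence with |f(x n) - f(y n)| ≥ ε
  rw [Metric.tendsto_atTop] at hnot
  push_neg at hnot
  obtain ⟨ε, hε, hfreq⟩ := hnot
  obtain ⟨b, hb, hbε⟩ := extraction_of_frequently_atTop (P := fun n => ε ≤ |f (x n) - f (y n)|)
    (frequently_atTop'.mpr fun N => by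
      obtain ⟨n, hn, h⟩ := hfreq (N + 1)
      refine ⟨n, by omega, ?_⟩
      simpa [Real.dist_eq, abs_abs] using h)
  -- Step 2: extract further subsequences so that f∘x and f∘y converge
  obtain ⟨u, -, φ, hφ, hu⟩ := isCompact_Icc.tendsto_subseq (fun n => hf01 (x (b n)))
  obtain ⟨v, -, ψ, hψ, hv⟩ := isCompact_Icc.tendsto_subseq (fun n => hf01 (y (b (φ n))))
  set a : ℕ → ℕ := fun n => b (φ (ψ n)) with ha
  have hamono : StrictMono a := hb.comp (hφ.comp hψ)
  have hxu : Tendsto (fun n => f (x (a n))) atTop (𝓝 u) := hu.comp hψ.tendsto_atTop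
  have hyv : Tendsto (fun n => f (y (a n))) atTop (𝓝 v) := hv
  have huv : u ≠ v := by
    have hlim : Tendsto (fun n => |f (x (a n)) - f (y (a n))|) atTop (𝓝 |u - v|) :=
      (hxu.sub hyv).abs
    have hge : ε ≤ |u - v| := ge_of_tendsto hlim (Eventually.of_forall fun n => hbε _)
    intro h
    rw [h, sub_self, abs_zero] at hge
    linarith
  refine ⟨a, hamono, ?_, ?_, ?_⟩
  · -- disjointness of coronas
    ext z
    simp only [Set.mem_inter_iff, Set.mem_diff, Set.mem_empty_iff_false, iff_false]
    rintro ⟨⟨hzx, hzX⟩, ⟨hzy, -⟩⟩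
    have hcx : MapClusterPt z atTop (fun n => x (a n)) :=
      escape_clusterPt X _ (fun n => hx _) hzx hzX
    have hcy : MapClusterPt z atTop (fun n => y (a n)) :=
      escape_clusterPt X _ (fun n => hy _) hzy hzX
    have hfx : MapClusterPt (f z) atTop (f ∘ fun n => x (a n)) :=
      hcx.tendsto_comp (f.continuous.tendsto z)
    have hfy : MapClusterPt (f z) atTop (f ∘ fun n => y (a n)) :=
      hcy.tendsto_comp (f.continuous.tendsto z)
    have h1 : f z = u := by
      refine eq_of_nhds_neBot (hfx.clusterPt.neBot.mono ?_)
      exact inf_le_inf_left _ (le_trans (map_mono le_rfl) hxu)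
    have h2 : f z = v := by
      refine eq_of_nhds_neBot (hfy.clusterPt.neBot.mono ?_)
      exact inf_le_inf_left _ (le_trans (map_mono le_rfl) hyv)
    exact huv (h1 ▸ h2)
  · -- nonempty x-corona
    by_contra h
    rw [Set.not_nonempty_iff_eq_empty, Set.diff_eq_empty] at h
    have hK : IsCompact (closure (Set.range fun n => x (a n))) :=
      isClosed_closure.isCompact
    have hfin := hsex _ h hK
    have hinf : {m : ℕ | x m ∈ closure (Set.range fun n => x (a n))}.Infinite :=
      Set.infinite_of_injective_forall_mem hamono.injective
        (fun n => subset_closure ⟨n, rfl⟩)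
    exact hinf hfin
  · -- nonempty y-corona
    by_contra h
    rw [Set.not_nonempty_iff_eq_empty, Set.diff_eq_empty] at h
    have hK : IsCompact (closure (Set.range fun n => y (a n))) :=
      isClosed_closure.isCompact
    have hfin := hsey _ h hK
    have hinf : {m : ℕ | y m ∈ closure (Set.range fun n => y (a n))}.Infinite :=
      Set.infinite_of_injective_forall_mem hamono.injective
        (fun n => subset_closure ⟨n, rfl⟩)
    exact hinf hfin
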